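/- For any two pseudo-differential operators P, Q, the residue satisfies res_∂(PQ) = res_∂(QP) modulo total derivatives; more precisely, res_∂(PQ − QP) is a total x-derivative (lies in the image of ∂_x on the coefficient ring). -/

import Mathlib

open scoped BigOperators

namespace PdoPaper

/-- Generalized binomial coefficient `C(i, k)` for an integer upper index `i`, as a rational:
`C(i,k) = i(i-1)⋯(i-k+1)/k!`. -/
noncomputable def zchoose (i : ℤ) (k : ℕ) : ℚ :=
  (∏ j ∈ Finset.range k, ((i : ℚ) - (j : ℚ))) / (Nat.factorial k : ℚ)

/-- A formal pseudo-differential operator `P = Σ_{i ≤ bound} (coeff i) ∂^i` over a ring `R`: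
a coefficient function `coeff : ℤ → R` vanishing above the bound. -/
structure PDO (R : Type) [CommRing R] [Algebra ℚ R] where
  coeff : ℤ → R
  bound : ℤ
  coeff_eq_zero : ∀ i : ℤ, bound < i → coeff i = 0

namespace PDO

variable {R : Type} [CommRing R] [Algebra ℚ R] (d : R → R)

/-- Multiplication of pseudo-differential operators, determined by the rule
`∂^i ∘ a = Σ_{k≥0} C(i,k) d^k(a) ∂^{i-k}` (`d` is the derivation of the coefficient ring).
The coefficient of `∂^m` in `P·Q` is `Σ_{i,k} C(i,k) · (P.coeff i) · d^k(Q.coeff (m-i+k))`. -/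
noncomputable def mul (P Q : PDO R) : PDO R where
  coeff m := ∑ i ∈ Finset.Icc (m - Q.bound) P.bound,
    ∑ k ∈ Finset.range ((Q.bound - m + i).toNat + 1),
      zchoose i k • (P.coeff i * d^[k] (Q.coeff (m - i + k)))
  bound := P.bound + Q.bound
  coeff_eq_zero := by
    intro m hm
    rw [Finset.Icc_eq_empty (by omega : ¬ (m - Q.bound ≤ P.bound))]
    simp

/-- The formal adjoint, determined by `(a ∂^i)* = (-∂)^i ∘ a`; its coefficient of `∂^m` is
`Σ_{i ≥ m} (-1)^i C(i, i-m) d^{i-m}(P.coeff i)`. -/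
noncomputable def adj (P : PDO R) : PDO R where
  coeff m := ∑ i ∈ Finset.Icc m P.bound,
      (((-1 : ℚ) ^ i) * zchoose i (i - m).toNat) • d^[(i - m).toNat] (P.coeff i)
  bound := P.bound
  coeff_eq_zero := by
    intro m hm
    rw [Finset.Icc_eq_empty (by omega : ¬ (m ≤ P.bound))]
    simp

/-- The residue of a pseudo-differential operator: the coefficient of `∂^{-1}`. -/
def res (P : PDO R) : R := P.coeff (-1)

/-- The pseudo-differential operator `∂^m` (`m ∈ ℤ`). -/
def delPow (m : ℤ) : PDO R where
  coeff i := if i = m then 1 else 0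
  bound := m
  coeff_eq_zero := by
    intro i h
    simp [show i ≠ m by omega]

/-- The multiplication operator by a function `f` (i.e. `f ∂^0`). -/
def ofFun (f : R) : PDO R where
  coeff i := if i = 0 then f else 0
  bound := 0
  coeff_eq_zero := by
    intro i h
    simp [show i ≠ 0 by omega]

/-- Difference of pseudo-differential operators. -/
def sub (P Q : PDO R) : PDO R where
  coeff i := P.coeff i - Q.coeff i
  bound := max P.bound Q.bound
  coeff_eq_zero := by
    intro i h
    rw [P.coeff_eq_zero i ((le_max_left _ _).trans_lt h),
      Q.coeff_eq_zero i ((le_max_right _ _).trans_lt h), sub_self]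

/-- `n`-th power of a pseudo-differential operator. -/
noncomputable def npow (P : PDO R) : ℕ → PDO R
  | 0 => delPow 0
  | n + 1 => mul d (npow P n) P

/-- The differential-operator (non-negative) part `P₊`. -/
def posPart (P : PDO R) : PDO R where
  coeff i := if 0 ≤ i then P.coeff i else 0
  bound := P.bound
  coeff_eq_zero := by
    intro i h
    rw [P.coeff_eq_zero i h]
    simp

/-- The strictly negative part `P₋`. -/
def negPart (P : PDO R) : PDO R where
  coeff i := if i < 0 then P.coeff i else 0
  bound := -1
  coeff_eq_zero := by
    intro i h
    simp [show ¬ i < 0 by omega]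

/-- Application of (the differential-operator part of) a pseudo-differential operator
to a function `f` of the coefficient ring: `(Σ_{i≥0} a_i ∂^i)(f) = Σ_{i≥0} a_i d^i(f)`. -/
noncomputable def app (P : PDO R) (f : R) : R :=
  ∑ i ∈ Finset.range (P.bound.toNat + 1), P.coeff (i : ℤ) * d^[i] f

end PDO

end PdoPaper

section ResAux

open PdoPaper

variable {R : Type} [CommRing R] [Algebra ℚ R]

section DLemmas

variable (d : R → R)
variable (hd_add : ∀ a b : R, d (a + b) = d a + d b)
variable (hd_mul : ∀ a b : R, d (a * b) = d a * b + a * d b)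

include hd_add

private lemma d_zero' : d 0 = 0 := by
  have h := hd_add 0 0
  rw [add_zero] at h
  exact (left_eq_add.mp h)

private lemma d_sub' (a b : R) : d (a - b) = d a - d b :=
  map_sub (AddMonoidHom.mk' d hd_add) a b

private lemma d_sum' {ι : Type*} (s : Finset ι) (f : ι → R) :
    d (∑ i ∈ s, f i) = ∑ i ∈ s, d (f i) :=
  map_sum (AddMonoidHom.mk' d hd_add) f s

include hd_mul

private lemma d_one' : d 1 = 0 := by
  have h := hd_mul 1 1
  rw [mul_one, one_mul, mul_one] at h
  exact (left_eq_add.mp h)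

private lemma d_nat' (n : ℕ) : d (n : R) = 0 := by
  induction n with
  | zero => simpa using d_zero' d hd_add
  | succ m ih =>
      push_cast
      rw [hd_add, ih, d_one' d hd_add hd_mul, add_zero]

private lemma d_int' (n : ℤ) : d (n : R) = 0 := by
  cases n with
  | ofNat m => simpa using d_nat' d hd_add hd_mul m
  | negSucc m =>
      have h := hd_add ((m + 1 : ℕ) : R) (Int.negSucc m : R)
      have h2 : ((m + 1 : ℕ) : R) + (Int.negSucc m : R) = 0 := by
        rw [Int.cast_negSucc]; push_cast; ring
      rw [h2, d_zero' d hd_add, d_nat' d hd_add hd_mul] at h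
      simpa using h.symm

private lemma d_algebraMap' (q : ℚ) : d (algebraMap ℚ R q) = 0 := by
  have hden : (q.den : ℚ) * q = (q.num : ℚ) := by
    have h0 : ((q.den : ℕ) : ℚ) ≠ 0 := by exact_mod_cast q.den_ne_zero
    have h1 : (q.num : ℚ) / q.den * q.den = (q.num : ℚ) := div_mul_cancel₀ _ h0
    rw [Rat.num_div_den] at h1
    rw [mul_comm]
    exact h1
  have h1 : (q.den : R) * algebraMap ℚ R q = ((q.num : ℤ) : R) := by
    rw [show ((q.den : ℕ) : R) = algebraMap ℚ R ((q.den : ℕ) : ℚ) by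
      rw [map_natCast], ← map_mul, hden, map_intCast]
  have h2 := hd_mul ((q.den : ℕ) : R) (algebraMap ℚ R q)
  rw [h1, d_int' d hd_add hd_mul, d_nat' d hd_add hd_mul, zero_mul, zero_add] at h2
  have h3 : ((q.den : ℕ) : ℚ) • d (algebraMap ℚ R q) = 0 := by
    rw [Algebra.smul_def, map_natCast, ← h2]
  have hden0 : ((q.den : ℕ) : ℚ) ≠ 0 := by
    exact_mod_cast q.den_ne_zero
  have := congrArg (fun x => ((q.den : ℕ) : ℚ)⁻¹ • x) h3
  simpa [smul_smul, inv_mul_cancel₀ hden0] using this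

private lemma d_smul' (q : ℚ) (a : R) : d (q • a) = q • d a := by
  rw [Algebra.smul_def, hd_mul, d_algebraMap' d hd_add hd_mul, zero_mul, zero_add,
    ← Algebra.smul_def]

end DLemmas

/-- Integration-by-parts potential: `d (ibpG d n a b) = a d^n b - (-1)^n b d^n a`. -/
private noncomputable def ibpG (d : R → R) (n : ℕ) (a b : R) : R :=
  ∑ s ∈ Finset.range n, ((-1 : ℚ) ^ s) • (d^[s] a * d^[n - 1 - s] b)

private lemma ibp (d : R → R)
    (hd_add : ∀ a b : R, d (a + b) = d a + d b)
    (hd_mul : ∀ a b : R, d (a * b) = d a * b + a * d b)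
    (n : ℕ) (a b : R) :
    d (ibpG d n a b) = a * d^[n] b - ((-1 : ℚ) ^ n) • (b * d^[n] a) := by
  induction n generalizing a with
  | zero => simp [ibpG, d_zero' d hd_add, mul_comm]
  | succ m ih =>
      have hsplit : ibpG d (m + 1) a b = a * d^[m] b - ibpG d m (d a) b := by
        rw [ibpG, Finset.sum_range_succ']
        have h0 : ((-1 : ℚ) ^ 0) • (d^[0] a * d^[m + 1 - 1 - 0] b) = a * d^[m] b := by
          simp
        rw [h0]
        have h1 : ∀ s ∈ Finset.range m,
            ((-1 : ℚ) ^ (s + 1)) • (d^[s + 1] a * d^[m + 1 - 1 - (s + 1)] b)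
              = -(((-1 : ℚ) ^ s) • (d^[s] (d a) * d^[m - 1 - s] b)) := by
          intro s _
          rw [pow_succ, Function.iterate_succ_apply]
          have : m + 1 - 1 - (s + 1) = m - 1 - s := by omega
          rw [this]
          rw [mul_comm ((-1 : ℚ) ^ s) (-1), neg_one_mul, neg_smul]
        rw [Finset.sum_congr rfl h1, Finset.sum_neg_distrib]
        rw [ibpG]
        ring
      rw [hsplit, d_sub' d hd_add, hd_mul, ih (d a)]
      rw [← Function.iterate_succ_apply, ← Function.iterate_succ_apply' d m b]
      rw [pow_succ]
      have : ((-1 : ℚ) ^ m * -1) • (b * d^[m + 1] a) =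
          -(((-1 : ℚ) ^ m) • (b * d^[m + 1] a)) := by
        rw [mul_comm, neg_one_mul, neg_smul]
      rw [this, sub_neg_eq_add]
      abel

private lemma zchoose_reflect (i : ℤ) (k : ℕ) :
    zchoose (-1 - i + k) k = (-1 : ℚ) ^ k * zchoose i k := by
  unfold zchoose
  rw [← mul_div_assoc]
  congr 1
  have h : ∀ j ∈ Finset.range k,
      (((-1 - i + k : ℤ) : ℚ) - ((k - 1 - j : ℕ) : ℚ)) = (-1) * ((i : ℚ) - j) := by
    intro j hj
    have hj' : j < k := Finset.mem_range.mp hj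
    have : ((k - 1 - j : ℕ) : ℚ) = (k : ℚ) - 1 - j := by
      have : (k - 1 - j : ℕ) = k - 1 - j := rfl
      push_cast [Nat.cast_sub (by omega : j ≤ k - 1), Nat.cast_sub (by omega : 1 ≤ k)]
      ring
    rw [this]
    push_cast
    ring
  calc ∏ j ∈ Finset.range k, (((-1 - i + k : ℤ) : ℚ) - (j : ℚ))
      = ∏ j ∈ Finset.range k, (((-1 - i + k : ℤ) : ℚ) - ((k - 1 - j : ℕ) : ℚ)) := by
        rw [Finset.prod_range_reflect (fun j => (((-1 - i + k : ℤ) : ℚ) - (j : ℚ))) k]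
    _ = ∏ j ∈ Finset.range k, (-1) * ((i : ℚ) - j) := Finset.prod_congr rfl h
    _ = (-1 : ℚ) ^ k * ∏ j ∈ Finset.range k, ((i : ℚ) - j) := by
        rw [Finset.prod_mul_distrib, Finset.prod_const, Finset.card_range]

end ResAux

open PdoPaper PdoPaper.PDO in
/-- `res_∂(PQ) = res_∂(QP)` modulo total derivatives: `res_∂(PQ - QP)` is a
total `x`-derivative, i.e. lies in the image of the derivation `d` of the coefficient ring. -/
theorem res_commutator_is_total_derivative {R : Type} [CommRing R] [Algebra ℚ R] (d : R → R)
    (hd_add : ∀ a b : R, d (a + b) = d a + d b)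
    (hd_mul : ∀ a b : R, d (a * b) = d a * b + a * d b)
    (P Q : PDO R) :
    ∃ g : R, res (mul d P Q) - res (mul d Q P) = d g := by
  classical
  set S1 := (Finset.Icc (-1 - Q.bound) P.bound).sigma
      (fun i => Finset.range ((Q.bound - (-1) + i).toNat + 1)) with hS1
  set S2 := (Finset.Icc (-1 - P.bound) Q.bound).sigma
      (fun j => Finset.range ((P.bound - (-1) + j).toNat + 1)) with hS2
  have h1 : res (mul d P Q) = ∑ x ∈ S1,
      zchoose x.1 x.2 • (P.coeff x.1 * d^[x.2] (Q.coeff (-1 - x.1 + x.2))) := by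
    show (∑ i ∈ Finset.Icc (-1 - Q.bound) P.bound,
      ∑ k ∈ Finset.range ((Q.bound - (-1) + i).toNat + 1),
        zchoose i k • (P.coeff i * d^[k] (Q.coeff (-1 - i + k)))) = _
    rw [hS1]
    exact Finset.sum_sigma' (Finset.Icc (-1 - Q.bound) P.bound)
      (fun i => Finset.range ((Q.bound - -1 + i).toNat + 1))
      (fun i k => zchoose i k • (P.coeff i * d^[k] (Q.coeff (-1 - i + k))))
  have h2 : res (mul d Q P) = ∑ y ∈ S2,
      zchoose y.1 y.2 • (Q.coeff y.1 * d^[y.2] (P.coeff (-1 - y.1 + y.2))) := by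
    show (∑ j ∈ Finset.Icc (-1 - P.bound) Q.bound,
      ∑ l ∈ Finset.range ((P.bound - (-1) + j).toNat + 1),
        zchoose j l • (Q.coeff j * d^[l] (P.coeff (-1 - j + l)))) = _
    rw [hS2]
    exact Finset.sum_sigma' (Finset.Icc (-1 - P.bound) Q.bound)
      (fun j => Finset.range ((P.bound - -1 + j).toNat + 1))
      (fun j l => zchoose j l • (Q.coeff j * d^[l] (P.coeff (-1 - j + l))))
  have hswap : res (mul d Q P) = ∑ x ∈ S1,
      zchoose (-1 - x.1 + x.2) x.2 •
        (Q.coeff (-1 - x.1 + x.2) * d^[x.2] (P.coeff (-1 - (-1 - x.1 + x.2) + x.2))) := by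
    rw [h2]
    refine (Finset.sum_nbij' (i := fun x : Σ _ : ℤ, ℕ => (⟨-1 - x.1 + x.2, x.2⟩ : Σ _ : ℤ, ℕ))
      (j := fun y : Σ _ : ℤ, ℕ => (⟨-1 - y.1 + y.2, y.2⟩ : Σ _ : ℤ, ℕ))
      ?_ ?_ ?_ ?_ ?_).symm
    · rintro ⟨i, k⟩ ha
      rw [hS1, Finset.mem_sigma, Finset.mem_Icc, Finset.mem_range] at ha
      rw [hS2, Finset.mem_sigma, Finset.mem_Icc, Finset.mem_range]
      dsimp only at ha ⊢
      omega
    · rintro ⟨i, k⟩ ha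
      rw [hS2, Finset.mem_sigma, Finset.mem_Icc, Finset.mem_range] at ha
      rw [hS1, Finset.mem_sigma, Finset.mem_Icc, Finset.mem_range]
      dsimp only at ha ⊢
      omega
    · rintro ⟨i, k⟩ _
      have h : (-1 - (-1 - i + (k : ℤ)) + (k : ℤ)) = i := by omega
      dsimp only
      rw [h]
    · rintro ⟨i, k⟩ _
      have h : (-1 - (-1 - i + (k : ℤ)) + (k : ℤ)) = i := by omega
      dsimp only
      rw [h]
    · intro a _
      rfl
  refine ⟨∑ x ∈ S1, zchoose x.1 x.2 • ibpG d x.2 (P.coeff x.1) (Q.coeff (-1 - x.1 + x.2)), ?_⟩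
  rw [h1, hswap, ← Finset.sum_sub_distrib, d_sum' d hd_add]
  refine Finset.sum_congr rfl ?_
  intro x _
  rw [d_smul' d hd_add hd_mul, ibp d hd_add hd_mul]
  have hi : (-1 - (-1 - x.1 + (x.2 : ℤ)) + (x.2 : ℤ)) = x.1 := by ring
  rw [hi, zchoose_reflect, smul_sub, mul_smul, smul_comm ((-1 : ℚ) ^ x.snd) (zchoose x.fst x.snd)]
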